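/- Fix ε with 0 ≤ ε ≤ 1/2 and for θ ∈ ℝ set a(θ) = 2√(ε(1−ε))·cos 2θ + (1−2ε)·sin 2θ and b(θ) = (1−2ε)·cos 2θ + 2√(ε(1−ε))·sin 2θ. Then the supremum over θ ∈ ℝ of the largest eigenvalue of the Hermitian 8×8 matrix a(θ)·(Z⊗I⊗I + I⊗X⊗Z) + b(θ)·(X⊗Z⊗I + X⊗I⊗X) + I⊗Z⊗X + Z⊗X⊗Z equals 2·(1 + √(1 + 4(1−2ε)√(ε(1−ε)))), and it is attained at θ = π/8. -/

import Mathlib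

open Matrix Complex Kronecker

noncomputable section

def PauliX : Matrix (Fin 2) (Fin 2) ℂ := !![0, 1; 1, 0]
def PauliY : Matrix (Fin 2) (Fin 2) ℂ := !![0, -Complex.I; Complex.I, 0]
def PauliZ : Matrix (Fin 2) (Fin 2) ℂ := !![1, 0; 0, -1]

/-- The 2×2 identity matrix. -/
def Id2 : Matrix (Fin 2) (Fin 2) ℂ := 1

/-- The largest eigenvalue of a (Hermitian) matrix, as the supremum of the
    Rayleigh quotient over unit vectors. -/
noncomputable def maxEig {m : Type*} [Fintype m] [DecidableEq m]
    (M : Matrix m m ℂ) : ℝ :=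
  ⨆ v : {v : m → ℂ // ∑ i, Complex.normSq (v i) = 1},
    (star v.1 ⬝ᵥ (M *ᵥ v.1)).re

/-- a(θ) = ⟨X̃₁⟩ = 2√(ε(1−ε))·cos 2θ + (1−2ε)·sin 2θ. -/
def aCoef (ε θ : ℝ) : ℝ :=
  2 * Real.sqrt (ε * (1 - ε)) * Real.cos (2 * θ) + (1 - 2 * ε) * Real.sin (2 * θ)

/-- b(θ) = ⟨Z̃₁⟩ = (1−2ε)·cos 2θ + 2√(ε(1−ε))·sin 2θ. -/
def bCoef (ε θ : ℝ) : ℝ :=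
  (1 - 2 * ε) * Real.cos (2 * θ) + 2 * Real.sqrt (ε * (1 - ε)) * Real.sin (2 * θ)

/-- The reduced four-qubit cluster-state witness operator
    a(θ)·(Z⊗I⊗I + I⊗X⊗Z) + b(θ)·(X⊗Z⊗I + X⊗I⊗X) + I⊗Z⊗X + Z⊗X⊗Z. -/
def C4red (ε θ : ℝ) : Matrix ((Fin 2 × Fin 2) × Fin 2) ((Fin 2 × Fin 2) × Fin 2) ℂ :=
  ((aCoef ε θ : ℝ) : ℂ) • (PauliZ ⊗ₖ Id2 ⊗ₖ Id2 + Id2 ⊗ₖ PauliX ⊗ₖ PauliZ)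
    + ((bCoef ε θ : ℝ) : ℂ) • (PauliX ⊗ₖ PauliZ ⊗ₖ Id2 + PauliX ⊗ₖ Id2 ⊗ₖ PauliX)
    + Id2 ⊗ₖ PauliZ ⊗ₖ PauliX + PauliZ ⊗ₖ PauliX ⊗ₖ PauliZ

/-! ### Auxiliary 2×2 matrix algebra -/

def Wm : Matrix (Fin 2) (Fin 2) ℂ := !![0, 1; -1, 0]

lemma hXX : PauliX * PauliX = 1 := by
  ext i j; fin_cases i <;> fin_cases j <;>
    simp [PauliX, Matrix.mul_apply, Fin.sum_univ_two]

lemma hZZ : PauliZ * PauliZ = 1 := by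
  ext i j; fin_cases i <;> fin_cases j <;>
    simp [PauliZ, Matrix.mul_apply, Fin.sum_univ_two]

lemma hZX : PauliZ * PauliX = Wm := by
  ext i j; fin_cases i <;> fin_cases j <;>
    simp [PauliZ, PauliX, Wm, Matrix.mul_apply, Fin.sum_univ_two]

lemma hXZ : PauliX * PauliZ = -Wm := by
  ext i j; fin_cases i <;> fin_cases j <;>
    simp [PauliZ, PauliX, Wm, Matrix.mul_apply, Fin.sum_univ_two]

lemma hWW : Wm * Wm = -1 := by
  ext i j; fin_cases i <;> fin_cases j <;>
    simp [Wm, Matrix.mul_apply, Fin.sum_univ_two]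

lemma hXh : PauliXᴴ = PauliX := by
  ext i j; fin_cases i <;> fin_cases j <;> simp [PauliX]

lemma hZh : PauliZᴴ = PauliZ := by
  ext i j; fin_cases i <;> fin_cases j <;> simp [PauliZ]

lemma hWh : Wmᴴ = -Wm := by
  ext i j; fin_cases i <;> fin_cases j <;> simp [Wm]

lemma kron_conjT {l m n p : Type*} (A : Matrix l m ℂ) (B : Matrix n p ℂ) :
    (A ⊗ₖ B)ᴴ = Aᴴ ⊗ₖ Bᴴ := by
  ext ⟨i, j⟩ ⟨k, l'⟩
  simp [Matrix.conjTranspose_apply, Matrix.kroneckerMap_apply, mul_comm]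

lemma neg_kron {l m n p : Type*} (A : Matrix l m ℂ) (B : Matrix n p ℂ) :
    (-A) ⊗ₖ B = -(A ⊗ₖ B) := by
  ext ⟨i, j⟩ ⟨k, l'⟩
  simp [Matrix.kroneckerMap_apply]

lemma kron_neg {l m n p : Type*} (A : Matrix l m ℂ) (B : Matrix n p ℂ) :
    A ⊗ₖ (-B) = -(A ⊗ₖ B) := by
  ext ⟨i, j⟩ ⟨k, l'⟩
  simp [Matrix.kroneckerMap_apply]

/-! ### The 8×8 operators -/

abbrev Q8 := (Fin 2 × Fin 2) × Fin 2

def MA : Matrix Q8 Q8 ℂ := PauliZ ⊗ₖ Id2 ⊗ₖ Id2 + Id2 ⊗ₖ PauliX ⊗ₖ PauliZ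
def MB : Matrix Q8 Q8 ℂ := PauliX ⊗ₖ PauliZ ⊗ₖ Id2 + PauliX ⊗ₖ Id2 ⊗ₖ PauliX
def P5 : Matrix Q8 Q8 ℂ := Id2 ⊗ₖ PauliZ ⊗ₖ PauliX
def P6 : Matrix Q8 Q8 ℂ := PauliZ ⊗ₖ PauliX ⊗ₖ PauliZ
def MS : Matrix Q8 Q8 ℂ := PauliZ ⊗ₖ Wm ⊗ₖ Wm

lemma hMA2 : MA * MA = (4:ℂ) • 1 - (1 - P6) * (1 - P6) := by
  simp only [MA, P6, Id2, add_mul, mul_add, sub_mul, mul_sub, mul_one, one_mul,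
    ← Matrix.mul_kronecker_mul, Matrix.one_kronecker_one, hXX, hZZ, hZX, hXZ, hWW,
    neg_kron, kron_neg]
  module

lemma hMB2 : MB * MB = (4:ℂ) • 1 - (1 - P5) * (1 - P5) := by
  simp only [MB, P5, Id2, add_mul, mul_add, sub_mul, mul_sub, mul_one, one_mul,
    ← Matrix.mul_kronecker_mul, Matrix.one_kronecker_one, hXX, hZZ, hZX, hXZ, hWW,
    neg_kron, kron_neg]
  module

lemma hAB : MA * MB + MB * MA = 0 := by
  simp only [MA, MB, Id2, add_mul, mul_add, mul_one, one_mul,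
    ← Matrix.mul_kronecker_mul, Matrix.one_kronecker_one, hXX, hZZ, hZX, hXZ, hWW,
    neg_kron, kron_neg]
  module

lemma hMC2 : (P5 + P6) * (P5 + P6) = (4:ℂ) • 1 - (1 + MS) * (1 + MS) := by
  simp only [P5, P6, MS, Id2, add_mul, mul_add, mul_one, one_mul,
    ← Matrix.mul_kronecker_mul, Matrix.one_kronecker_one, hXX, hZZ, hZX, hXZ, hWW,
    neg_kron, kron_neg]
  module

lemma hMAh : MAᴴ = MA := by
  simp [MA, Id2, kron_conjT, hXh, hZh]

lemma hMBh : MBᴴ = MB := by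
  simp [MB, Id2, kron_conjT, hXh, hZh]

lemma hMCh : (P5 + P6)ᴴ = P5 + P6 := by
  simp [P5, P6, Id2, kron_conjT, hXh, hZh]

lemma hQ6h : ((1 : Matrix Q8 Q8 ℂ) - P6)ᴴ = 1 - P6 := by
  simp [P6, Id2, kron_conjT, hXh, hZh]

lemma hQ5h : ((1 : Matrix Q8 Q8 ℂ) - P5)ᴴ = 1 - P5 := by
  simp [P5, Id2, kron_conjT, hXh, hZh]

lemma hNSh : ((1 : Matrix Q8 Q8 ℂ) + MS)ᴴ = 1 + MS := by
  simp [MS, kron_conjT, hZh, hWh, neg_kron, kron_neg]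

/-! ### Rayleigh quotient machinery -/

lemma dot_self_eq {n : Type*} [Fintype n] (v : n → ℂ) :
    star v ⬝ᵥ v = ((∑ i, Complex.normSq (v i) : ℝ) : ℂ) := by
  simp only [dotProduct, Pi.star_apply, Complex.ofReal_sum]
  refine Finset.sum_congr rfl fun i _ => ?_
  rw [Complex.star_def, ← Complex.normSq_eq_conj_mul_self]

lemma dot_cs {n : Type*} [Fintype n] (v w : n → ℂ) :
    (star v ⬝ᵥ w).re ≤
      Real.sqrt (∑ i, Complex.normSq (v i)) * Real.sqrt (∑ i, Complex.normSq (w i)) := by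
  have h1 : (star v ⬝ᵥ w).re = ∑ i, (starRingEnd ℂ (v i) * w i).re := by
    simp [dotProduct, Complex.re_sum, Complex.star_def]
  have h2 : ∀ i : n, (starRingEnd ℂ (v i) * w i).re ≤ ‖v i‖ * ‖w i‖ := by
    intro i
    calc (starRingEnd ℂ (v i) * w i).re ≤ ‖starRingEnd ℂ (v i) * w i‖ :=
          Complex.re_le_norm _
      _ = ‖v i‖ * ‖w i‖ := by
          rw [norm_mul, Complex.norm_conj]
  have h3 : ∑ i, ‖v i‖ * ‖w i‖ ≤
      Real.sqrt (∑ i, Complex.normSq (v i)) * Real.sqrt (∑ i, Complex.normSq (w i)) := by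
    have hcs := Finset.sum_mul_sq_le_sq_mul_sq Finset.univ
      (fun i => ‖v i‖) (fun i => ‖w i‖)
    have hnn : (0:ℝ) ≤ ∑ i, ‖v i‖ * ‖w i‖ :=
      Finset.sum_nonneg fun i _ => mul_nonneg (norm_nonneg _) (norm_nonneg _)
    have e1 : ∑ i, ‖v i‖ ^ 2 = ∑ i, Complex.normSq (v i) := by
      simp [Complex.sq_norm]
    have e2 : ∑ i, ‖w i‖ ^ 2 = ∑ i, Complex.normSq (w i) := by
      simp [Complex.sq_norm]
    calc ∑ i, ‖v i‖ * ‖w i‖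
        = Real.sqrt ((∑ i, ‖v i‖ * ‖w i‖) ^ 2) := by
          rw [Real.sqrt_sq hnn]
      _ ≤ Real.sqrt ((∑ i, ‖v i‖ ^ 2) * ∑ i, ‖w i‖ ^ 2) :=
          Real.sqrt_le_sqrt hcs
      _ = _ := by
          rw [e1, e2, Real.sqrt_mul (Finset.sum_nonneg fun i _ => Complex.normSq_nonneg _)]
  calc (star v ⬝ᵥ w).re = ∑ i, (starRingEnd ℂ (v i) * w i).re := h1
    _ ≤ ∑ i, ‖v i‖ * ‖w i‖ := Finset.sum_le_sum fun i _ => h2 i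
    _ ≤ _ := h3

lemma dot_sq_herm {n : Type*} [Fintype n] (N : Matrix n n ℂ) (hN : Nᴴ = N) (v : n → ℂ) :
    (star v ⬝ᵥ ((N * N) *ᵥ v)).re = ∑ i, Complex.normSq ((N *ᵥ v) i) := by
  have h : star v ⬝ᵥ ((N * N) *ᵥ v) = star (N *ᵥ v) ⬝ᵥ (N *ᵥ v) := by
    rw [← Matrix.mulVec_mulVec, Matrix.dotProduct_mulVec, Matrix.star_mulVec, hN]
  rw [h, dot_self_eq, Complex.ofReal_re]

lemma rayleigh_le {n : Type*} [Fintype n] [DecidableEq n]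
    (H N1 N2 : Matrix n n ℂ) (hH : Hᴴ = H) (hN1 : N1ᴴ = N1) (hN2 : N2ᴴ = N2)
    (r : ℝ) (hr : 0 ≤ r)
    (hid : H * H + N1 * N1 + N2 * N2 = ((r ^ 2 : ℝ) : ℂ) • 1)
    (v : n → ℂ) (hv : ∑ i, Complex.normSq (v i) = 1) :
    (star v ⬝ᵥ (H *ᵥ v)).re ≤ r := by
  have key : ∑ i, Complex.normSq ((H *ᵥ v) i) ≤ r ^ 2 := by
    have e := congrArg (fun M : Matrix n n ℂ => (star v ⬝ᵥ (M *ᵥ v)).re) hid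
    simp only [Matrix.add_mulVec, dotProduct_add, Complex.add_re,
      Matrix.smul_mulVec, Matrix.one_mulVec, dotProduct_smul,
      smul_eq_mul] at e
    rw [dot_sq_herm H hH, dot_sq_herm N1 hN1, dot_sq_herm N2 hN2] at e
    rw [dot_self_eq v, hv] at e
    simp only [Complex.ofReal_one, mul_one, Complex.ofReal_re] at e
    have p1 : (0:ℝ) ≤ ∑ i, Complex.normSq ((N1 *ᵥ v) i) :=
      Finset.sum_nonneg fun i _ => Complex.normSq_nonneg _
    have p2 : (0:ℝ) ≤ ∑ i, Complex.normSq ((N2 *ᵥ v) i) :=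
      Finset.sum_nonneg fun i _ => Complex.normSq_nonneg _
    linarith
  calc (star v ⬝ᵥ (H *ᵥ v)).re
      ≤ Real.sqrt (∑ i, Complex.normSq (v i)) *
          Real.sqrt (∑ i, Complex.normSq ((H *ᵥ v) i)) := dot_cs v (H *ᵥ v)
    _ = Real.sqrt (∑ i, Complex.normSq ((H *ᵥ v) i)) := by rw [hv, Real.sqrt_one, one_mul]
    _ ≤ Real.sqrt (r ^ 2) := Real.sqrt_le_sqrt key
    _ = r := Real.sqrt_sq hr

lemma exists_unit_rayleigh {n : Type*} [Fintype n] [DecidableEq n]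
    (M : Matrix n n ℂ) (u : n → ℂ) (lam : ℝ)
    (hMu : M *ᵥ u = ((lam : ℝ) : ℂ) • u)
    (hu : 0 < ∑ i, Complex.normSq (u i)) :
    ∃ v : {v : n → ℂ // ∑ i, Complex.normSq (v i) = 1},
      (star v.1 ⬝ᵥ (M *ᵥ v.1)).re = lam := by
  set nn : ℝ := ∑ i, Complex.normSq (u i) with hnn
  set c : ℝ := (Real.sqrt nn)⁻¹ with hc
  have hsq : c ^ 2 * nn = 1 := by
    rw [hc, inv_pow, ← Real.sqrt_sq hu.le, Real.sqrt_sq_eq_abs, abs_of_pos hu,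
      Real.sq_sqrt hu.le]
    field_simp
  have hvn : ∑ i, Complex.normSq (((c : ℂ) • u) i) = 1 := by
    simp only [Pi.smul_apply, smul_eq_mul, Complex.normSq_mul, Complex.normSq_ofReal,
      ← Finset.mul_sum]
    rw [← hnn, ← hsq]; ring
  refine ⟨⟨(c : ℂ) • u, hvn⟩, ?_⟩
  have h1 : M *ᵥ ((c : ℂ) • u) = (c : ℂ) • (((lam : ℝ) : ℂ) • u) := by
    rw [Matrix.mulVec_smul, hMu]
  rw [h1]
  rw [show star ((c : ℂ) • u) = (c : ℂ) • star u by
    rw [star_smul]; simp [Complex.star_def, Complex.conj_ofReal]]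
  rw [smul_dotProduct, dotProduct_smul, dotProduct_smul, dot_self_eq]
  rw [← hnn]
  simp only [smul_eq_mul]
  rw [show ((c:ℂ) * ((c:ℂ) * (((lam:ℝ):ℂ) * (nn:ℂ)))) = (((c^2 * nn * lam : ℝ)):ℂ) by
    push_cast; ring]
  rw [hsq, Complex.ofReal_re]; ring

/-! ### Upper bound for the Rayleigh quotient of `C4red` -/

lemma C4red_split (ε θ : ℝ) :
    C4red ε θ = (((aCoef ε θ : ℝ) : ℂ) • MA + ((bCoef ε θ : ℝ) : ℂ) • MB) + (P5 + P6) := by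
  rw [C4red, MA, MB, P5, P6]
  module

lemma H1_herm (a b : ℝ) : (((a:ℝ):ℂ) • MA + ((b:ℝ):ℂ) • MB)ᴴ = ((a:ℝ):ℂ) • MA + ((b:ℝ):ℂ) • MB := by
  rw [Matrix.conjTranspose_add, Matrix.conjTranspose_smul, Matrix.conjTranspose_smul,
    hMAh, hMBh]
  simp [Complex.star_def, Complex.conj_ofReal]

lemma N1_herm (a : ℝ) : (((a:ℝ):ℂ) • ((1 : Matrix Q8 Q8 ℂ) - P6))ᴴ
    = ((a:ℝ):ℂ) • ((1 : Matrix Q8 Q8 ℂ) - P6) := by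
  rw [Matrix.conjTranspose_smul, hQ6h]
  simp [Complex.star_def, Complex.conj_ofReal]

lemma N2_herm (b : ℝ) : (((b:ℝ):ℂ) • ((1 : Matrix Q8 Q8 ℂ) - P5))ᴴ
    = ((b:ℝ):ℂ) • ((1 : Matrix Q8 Q8 ℂ) - P5) := by
  rw [Matrix.conjTranspose_smul, hQ5h]
  simp [Complex.star_def, Complex.conj_ofReal]

lemma H1_sos (a b : ℝ) :
    (((a:ℝ):ℂ) • MA + ((b:ℝ):ℂ) • MB) * (((a:ℝ):ℂ) • MA + ((b:ℝ):ℂ) • MB)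
      + (((a:ℝ):ℂ) • ((1 : Matrix Q8 Q8 ℂ) - P6)) * (((a:ℝ):ℂ) • ((1 : Matrix Q8 Q8 ℂ) - P6))
      + (((b:ℝ):ℂ) • ((1 : Matrix Q8 Q8 ℂ) - P5)) * (((b:ℝ):ℂ) • ((1 : Matrix Q8 Q8 ℂ) - P5))
      = (((2 * Real.sqrt (a ^ 2 + b ^ 2)) ^ 2 : ℝ) : ℂ) • 1 := by
  have hrr : ((2 * Real.sqrt (a ^ 2 + b ^ 2)) ^ 2 : ℝ) = 4 * (a ^ 2 + b ^ 2) := by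
    rw [mul_pow, Real.sq_sqrt (by positivity)]; ring
  rw [hrr]
  have expand : (((a:ℝ):ℂ) • MA + ((b:ℝ):ℂ) • MB) * (((a:ℝ):ℂ) • MA + ((b:ℝ):ℂ) • MB)
      = ((a:ℂ) * (a:ℂ)) • (MA * MA) + ((a:ℂ) * (b:ℂ)) • (MA * MB + MB * MA)
        + ((b:ℂ) * (b:ℂ)) • (MB * MB) := by
    simp only [add_mul, mul_add, Matrix.smul_mul, Matrix.mul_smul, smul_add, smul_smul]
    module
  rw [expand, hAB, hMA2, hMB2]
  have e1 : (((a:ℝ):ℂ) • ((1 : Matrix Q8 Q8 ℂ) - P6)) * (((a:ℝ):ℂ) • ((1 : Matrix Q8 Q8 ℂ) - P6))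
      = ((a:ℂ) * (a:ℂ)) • (((1 : Matrix Q8 Q8 ℂ) - P6) * ((1 : Matrix Q8 Q8 ℂ) - P6)) := by
    simp only [Matrix.smul_mul, Matrix.mul_smul, smul_smul]
  have e2 : (((b:ℝ):ℂ) • ((1 : Matrix Q8 Q8 ℂ) - P5)) * (((b:ℝ):ℂ) • ((1 : Matrix Q8 Q8 ℂ) - P5))
      = ((b:ℂ) * (b:ℂ)) • (((1 : Matrix Q8 Q8 ℂ) - P5) * ((1 : Matrix Q8 Q8 ℂ) - P5)) := by
    simp only [Matrix.smul_mul, Matrix.mul_smul, smul_smul]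
  rw [e1, e2]
  have hc : ((4 * (a ^ 2 + b ^ 2) : ℝ) : ℂ) = 4 * ((a:ℂ)^2 + (b:ℂ)^2) := by push_cast; ring
  rw [hc]
  module

lemma MC_sos : (P5 + P6) * (P5 + P6) + ((1 : Matrix Q8 Q8 ℂ) + MS) * ((1 : Matrix Q8 Q8 ℂ) + MS)
    + (0 : Matrix Q8 Q8 ℂ) * 0 = (((2:ℝ) ^ 2 : ℝ) : ℂ) • 1 := by
  rw [hMC2]
  norm_num

lemma C4red_rayleigh_le (ε θ : ℝ) (v : Q8 → ℂ) (hv : ∑ i, Complex.normSq (v i) = 1) :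
    (star v ⬝ᵥ (C4red ε θ *ᵥ v)).re
      ≤ 2 + 2 * Real.sqrt ((aCoef ε θ) ^ 2 + (bCoef ε θ) ^ 2) := by
  set a := aCoef ε θ
  set b := bCoef ε θ
  have hb1 := rayleigh_le (((a:ℝ):ℂ) • MA + ((b:ℝ):ℂ) • MB)
    (((a:ℝ):ℂ) • ((1 : Matrix Q8 Q8 ℂ) - P6)) (((b:ℝ):ℂ) • ((1 : Matrix Q8 Q8 ℂ) - P5))
    (H1_herm a b) (N1_herm a) (N2_herm b)
    (2 * Real.sqrt (a ^ 2 + b ^ 2)) (by positivity) (H1_sos a b) v hv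
  have hb2 := rayleigh_le (P5 + P6) ((1 : Matrix Q8 Q8 ℂ) + MS) (0 : Matrix Q8 Q8 ℂ)
    hMCh hNSh (by simp) 2 (by norm_num) MC_sos v hv
  have hsplit : (star v ⬝ᵥ (C4red ε θ *ᵥ v)).re
      = (star v ⬝ᵥ ((((a:ℝ):ℂ) • MA + ((b:ℝ):ℂ) • MB) *ᵥ v)).re
        + (star v ⬝ᵥ ((P5 + P6) *ᵥ v)).re := by
    rw [C4red_split, Matrix.add_mulVec, dotProduct_add, Complex.add_re]
  rw [hsplit]
  linarith

/-! ### The optimal eigenvector -/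

def qc : ℂ := ((Real.sqrt 2 - 1 : ℝ) : ℂ)

def uvec : Q8 → ℂ := fun p =>
  ![![![(1:ℂ), 1], ![1, -1]], ![![qc, qc], ![-qc, qc]]] p.1.1 p.1.2 p.2

lemma sqrt2_sq : ((Real.sqrt 2 : ℝ) : ℂ) * ((Real.sqrt 2 : ℝ) : ℂ) = 2 := by
  rw [← Complex.ofReal_mul, Real.mul_self_sqrt (by norm_num)]
  norm_num

lemma hMABu : (MA + MB) *ᵥ uvec = ((2 * Real.sqrt 2 : ℝ) : ℂ) • uvec := by
  funext p
  obtain ⟨⟨i, j⟩, k⟩ := p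
  have h := sqrt2_sq
  fin_cases i <;> fin_cases j <;> fin_cases k <;>
    · simp [MA, MB, uvec, qc, Matrix.mulVec, dotProduct, Fintype.sum_prod_type,
        Fin.sum_univ_two, Matrix.kroneckerMap_apply, PauliX, PauliZ, Id2, Matrix.one_apply]
      push_cast
      first
        | ring1
        | linear_combination (2:ℂ) * h
        | linear_combination (-2:ℂ) * h
        | linear_combination h
        | linear_combination (-1:ℂ) * h

lemma hMCu : (P5 + P6) *ᵥ uvec = (2 : ℂ) • uvec := by
  funext p
  obtain ⟨⟨i, j⟩, k⟩ := p
  have h := sqrt2_sq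
  fin_cases i <;> fin_cases j <;> fin_cases k <;>
    · simp [P5, P6, uvec, qc, Matrix.mulVec, dotProduct, Fintype.sum_prod_type,
        Fin.sum_univ_two, Matrix.kroneckerMap_apply, PauliX, PauliZ, Id2, Matrix.one_apply]
      push_cast
      first
        | ring1
        | linear_combination (2:ℂ) * h
        | linear_combination (-2:ℂ) * h
        | linear_combination h
        | linear_combination (-1:ℂ) * h

lemma uvec_pos : 0 < ∑ i, Complex.normSq (uvec i) := by
  have h0 : uvec ((0,0),0) = 1 := rfl
  have : (1:ℝ) ≤ ∑ i, Complex.normSq (uvec i) := by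
    calc (1:ℝ) = Complex.normSq (uvec ((0,0),0)) := by rw [h0]; simp
      _ ≤ ∑ i, Complex.normSq (uvec i) :=
        Finset.single_le_sum (fun i _ => Complex.normSq_nonneg _) (Finset.mem_univ _)
  linarith

/-! ### Main theorem -/

theorem cluster_one_party_bound (ε : ℝ) (hε0 : 0 ≤ ε) (hε1 : ε ≤ 1 / 2) :
    (⨆ θ : ℝ, maxEig (C4red ε θ))
        = 2 * (1 + Real.sqrt (1 + 4 * (1 - 2 * ε) * Real.sqrt (ε * (1 - ε))))
      ∧ maxEig (C4red ε (Real.pi / 8))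
        = 2 * (1 + Real.sqrt (1 + 4 * (1 - 2 * ε) * Real.sqrt (ε * (1 - ε)))) := by
  set sε : ℝ := Real.sqrt (ε * (1 - ε)) with hsε
  have hsεnn : 0 ≤ sε := Real.sqrt_nonneg _
  have hsε2 : sε ^ 2 = ε * (1 - ε) := Real.sq_sqrt (by nlinarith)
  have hcnn : 0 ≤ 1 - 2 * ε := by linarith
  set L : ℝ := 2 * (1 + Real.sqrt (1 + 4 * (1 - 2 * ε) * sε)) with hL
  have hsqrtL : Real.sqrt (1 + 4 * (1 - 2 * ε) * sε) = (1 - 2 * ε) + 2 * sε := by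
    rw [show 1 + 4 * (1 - 2 * ε) * sε = ((1 - 2 * ε) + 2 * sε) ^ 2 by nlinarith]
    exact Real.sqrt_sq (by linarith)
  have hLval : L = 2 + 2 * ((1 - 2 * ε) + 2 * sε) := by rw [hL, hsqrtL]; ring
  -- pointwise bound on a²+b²
  have hab_le : ∀ θ : ℝ, (aCoef ε θ) ^ 2 + (bCoef ε θ) ^ 2 ≤ ((1 - 2 * ε) + 2 * sε) ^ 2 := by
    intro θ
    have h1 := Real.sin_sq_add_cos_sq (2 * θ)
    have h2 := sq_nonneg (Real.sin (2 * θ) - Real.cos (2 * θ))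
    have h3 : 0 ≤ (1 - 2 * ε) * (2 * sε) := mul_nonneg hcnn (by positivity)
    unfold aCoef bCoef
    rw [← hsε]
    nlinarith [mul_nonneg h3 h2, h1, mul_nonneg h3 (sq_nonneg (Real.sin (2*θ) + Real.cos (2*θ)))]
  have bound_all : ∀ (θ : ℝ) (v : Q8 → ℂ), (∑ i, Complex.normSq (v i)) = 1 →
      (star v ⬝ᵥ (C4red ε θ *ᵥ v)).re ≤ L := by
    intro θ v hv
    have h := C4red_rayleigh_le ε θ v hv
    have h2 : Real.sqrt ((aCoef ε θ) ^ 2 + (bCoef ε θ) ^ 2) ≤ (1 - 2 * ε) + 2 * sε := by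
      calc Real.sqrt ((aCoef ε θ) ^ 2 + (bCoef ε θ) ^ 2)
          ≤ Real.sqrt (((1 - 2 * ε) + 2 * sε) ^ 2) := Real.sqrt_le_sqrt (hab_le θ)
        _ = (1 - 2 * ε) + 2 * sε := Real.sqrt_sq (by linarith)
    rw [hLval]
    linarith
  haveI hne : Nonempty {v : Q8 → ℂ // ∑ i, Complex.normSq (v i) = 1} := by
    refine ⟨⟨fun p => if p = ((0, 0), 0) then 1 else 0, ?_⟩⟩
    simp [apply_ite Complex.normSq]
  have hmaxle : ∀ θ : ℝ, maxEig (C4red ε θ) ≤ L := fun θ =>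
    ciSup_le fun v => bound_all θ v.1 v.2
  -- the eigenvector at θ = π/8
  have hacos : aCoef ε (Real.pi / 8) = (2 * sε + (1 - 2 * ε)) * (Real.sqrt 2 / 2) := by
    unfold aCoef
    rw [show 2 * (Real.pi / 8) = Real.pi / 4 by ring, Real.cos_pi_div_four,
      Real.sin_pi_div_four, ← hsε]
    ring
  have hbcos : bCoef ε (Real.pi / 8) = aCoef ε (Real.pi / 8) := by
    unfold aCoef bCoef
    rw [show 2 * (Real.pi / 8) = Real.pi / 4 by ring, Real.cos_pi_div_four,
      Real.sin_pi_div_four]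
    ring
  have hC4 : C4red ε (Real.pi / 8)
      = ((aCoef ε (Real.pi / 8) : ℝ) : ℂ) • (MA + MB) + (P5 + P6) := by
    rw [C4red_split, hbcos]
    module
  have hval : aCoef ε (Real.pi / 8) * (2 * Real.sqrt 2) + 2 = L := by
    rw [hacos, hLval]
    have h22 : Real.sqrt 2 * Real.sqrt 2 = 2 := Real.mul_self_sqrt (by norm_num)
    nlinarith [h22]
  have heig : C4red ε (Real.pi / 8) *ᵥ uvec = ((L : ℝ) : ℂ) • uvec := by
    rw [hC4, Matrix.add_mulVec, Matrix.smul_mulVec, hMABu, hMCu, smul_smul]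
    have hcast : ((aCoef ε (Real.pi / 8) : ℝ) : ℂ) * ((2 * Real.sqrt 2 : ℝ) : ℂ) + 2
        = ((L : ℝ) : ℂ) := by
      rw [← Complex.ofReal_mul]
      rw [show ((2:ℂ)) = ((2:ℝ):ℂ) by norm_num, ← Complex.ofReal_add, hval]
    rw [← hcast, add_smul]
  obtain ⟨v₀, hv₀⟩ := exists_unit_rayleigh (C4red ε (Real.pi / 8)) uvec L heig uvec_pos
  have hmax8 : maxEig (C4red ε (Real.pi / 8)) = L := by
    refine le_antisymm (hmaxle _) ?_
    rw [← hv₀]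
    exact le_ciSup ⟨L, by rintro x ⟨v, rfl⟩; exact bound_all (Real.pi / 8) v.1 v.2⟩ v₀
  refine ⟨le_antisymm (ciSup_le hmaxle) ?_, hmax8⟩
  rw [← hmax8]
  exact le_ciSup ⟨L, by rintro x ⟨θ, rfl⟩; exact hmaxle θ⟩ (Real.pi / 8)

end
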